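/- Let m ≥ 2 and let Δ : ℕ^(2) → [m] be a surjective colouring. Then there exist an infinite set X' ⊆ ℕ and a finite set X ⊆ ℕ \ X' such that (1) all edges inside X' have the same colour, (2) for every x ∈ X all edges from x to X' have the same colour, and (3) all m colours appear on edges inside X ∪ X'. -/

import Mathlib

/-- The set of colours appearing on edges inside `X` under the edge-colouring `Δ`
of the complete graph on `ℕ`. -/
def colorsOn {C : Type*} (Δ : ℕ → ℕ → C) (X : Set ℕ) : Set C :=
  {c | ∃ x ∈ X, ∃ y ∈ X, x ≠ y ∧ Δ x y = c}

/-- `F_Δ`: the set of values `γ(X)` (number of colours inside `X`)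
over infinite `X ⊆ ℕ`. -/
def FDelta {C : Type*} (Δ : ℕ → ℕ → C) : Set ℕ :=
  {k | ∃ X : Set ℕ, X.Infinite ∧ (colorsOn Δ X).ncard = k}

/-- Pigeonhole: an infinite set mapped to a finite type has an infinite fiber. -/
lemma pigeon_aux {β : Type*} [Finite β] {S : Set ℕ} (hS : S.Infinite) (f : ℕ → β) :
    ∃ c, {y ∈ S | f y = c}.Infinite := by
  by_contra h
  push_neg at h
  have hsub : S ⊆ ⋃ c, {y ∈ S | f y = c} := fun y hy => Set.mem_iUnion.2 ⟨f y, hy, rfl⟩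
  exact hS ((Set.finite_iUnion (fun c => h c)).subset hsub)

/-- Infinite Ramsey theorem for pairs (increasing form). -/
lemma ramsey_pairs {m : ℕ} (Δ : ℕ → ℕ → Fin m) :
    ∃ Y : Set ℕ, Y.Infinite ∧ ∃ c, ∀ x ∈ Y, ∀ y ∈ Y, x < y → Δ x y = c := by
  have step : ∀ S : Set ℕ, S.Infinite → ∃ T : Set ℕ, T.Infinite ∧ T ⊆ S ∧
      (∀ y ∈ T, sInf S < y) ∧ ∃ c, ∀ y ∈ T, Δ (sInf S) y = c := by
    intro S hS
    obtain ⟨c, hc⟩ := pigeon_aux (hS.diff (Set.finite_Iic (sInf S))) (Δ (sInf S))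
    refine ⟨_, hc, fun y hy => hy.1.1, fun y hy => ?_, c, fun y hy => hy.2⟩
    exact lt_of_not_ge (fun h => hy.1.2 h)
  choose T hTinf hTsub hTgt c hTc using step
  set Sseq : ℕ → {S : Set ℕ // S.Infinite} :=
    fun n => Nat.rec ⟨Set.univ, Set.infinite_univ⟩ (fun _ p => ⟨T p.1 p.2, hTinf p.1 p.2⟩) n
    with hSseq
  set x : ℕ → ℕ := fun n => sInf (Sseq n).1 with hx
  have hmem : ∀ n, x n ∈ (Sseq n).1 := fun n => Nat.sInf_mem (Sseq n).2.nonempty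
  have hsucc : ∀ n, (Sseq (n + 1)).1 = T (Sseq n).1 (Sseq n).2 := fun n => rfl
  have hchain : ∀ i j, i ≤ j → (Sseq j).1 ⊆ (Sseq i).1 := by
    intro i j hij
    induction j, hij using Nat.le_induction with
    | base => exact subset_rfl
    | succ k hk ih => exact (hsucc k ▸ hTsub _ _).trans ih
  have hkey : ∀ i j, i < j → x i < x j ∧ Δ (x i) (x j) = c (Sseq i).1 (Sseq i).2 := by
    intro i j hij
    have hxj : x j ∈ T (Sseq i).1 (Sseq i).2 := (hsucc i) ▸ hchain (i + 1) j hij (hmem j)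
    exact ⟨hTgt _ _ _ hxj, hTc _ _ _ hxj⟩
  obtain ⟨c₀, hI⟩ := pigeon_aux (S := Set.univ) Set.infinite_univ
    (fun n => c (Sseq n).1 (Sseq n).2)
  set I := {y ∈ (Set.univ : Set ℕ) | c (Sseq y).1 (Sseq y).2 = c₀} with hIdef
  have hxmono : StrictMono x := strictMono_nat_of_lt_succ fun n => (hkey n (n + 1) n.lt_succ_self).1
  refine ⟨x '' I, hI.image (hxmono.injective.injOn), c₀, ?_⟩
  rintro _ ⟨i, hi, rfl⟩ _ ⟨j, hj, rfl⟩ hlt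
  have hij : i < j := hxmono.lt_iff_lt.1 hlt
  rw [(hkey i j hij).2]
  exact hi.2

/-- There are an infinite `X'` and a finite `X ⊆ ℕ \ X'` such that `X'` is
monochromatic, every vertex of `X` sends a single colour to `X'`, and all `m`
colours appear inside `X ∪ X'`. -/
theorem stmt3 {m : ℕ} (hm : 2 ≤ m) (Δ : ℕ → ℕ → Fin m)
    (hsym : ∀ x y, Δ x y = Δ y x)
    (hsurj : ∀ c : Fin m, ∃ x y : ℕ, x ≠ y ∧ Δ x y = c) :
    ∃ X' X : Set ℕ, X'.Infinite ∧ X.Finite ∧ X ⊆ Set.univ \ X' ∧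
      (∃ c : Fin m, ∀ x ∈ X', ∀ y ∈ X', x ≠ y → Δ x y = c) ∧
      (∀ x ∈ X, ∃ c : Fin m, ∀ y ∈ X', Δ x y = c) ∧
      colorsOn Δ (X ∪ X') = Set.univ := by
  obtain ⟨Y, hYinf, c₀, hY⟩ := ramsey_pairs Δ
  -- witnesses for each colour
  choose a b hab hΔab using hsurj
  set Xfin : Finset ℕ := (Finset.univ : Finset (Fin m)).biUnion (fun c => {a c, b c}) with hXfin
  set X : Set ℕ := ↑Xfin with hXdef
  have haX : ∀ cc : Fin m, a cc ∈ Xfin := fun cc =>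
    Finset.mem_biUnion.2 ⟨cc, Finset.mem_univ _, by simp⟩
  have hbX : ∀ cc : Fin m, b cc ∈ Xfin := fun cc =>
    Finset.mem_biUnion.2 ⟨cc, Finset.mem_univ _, by simp⟩
  -- refine Y so that each vertex of X sends a single colour
  obtain ⟨g, hg⟩ := pigeon_aux (S := Y \ X) (hYinf.diff (Xfin.finite_toSet))
    (fun y => (fun xx : Xfin => Δ xx y))
  set X' : Set ℕ := {y ∈ Y \ X | (fun xx : Xfin => Δ xx y) = g} with hX'def
  have hX'sub : X' ⊆ Y \ X := fun y hy => hy.1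
  refine ⟨X', X, hg, Xfin.finite_toSet, ?_, ⟨c₀, ?_⟩, ?_, ?_⟩
  · intro z hz
    exact ⟨trivial, fun hzX' => (hX'sub hzX').2 hz⟩
  · intro u hu v hv huv
    rcases lt_or_gt_of_ne huv with h | h
    · exact hY u (hX'sub hu).1 v (hX'sub hv).1 h
    · exact (hsym u v).trans (hY v (hX'sub hv).1 u (hX'sub hu).1 h)
  · intro z hz
    refine ⟨g ⟨z, hz⟩, fun y hy => ?_⟩
    exact congrFun hy.2 ⟨z, hz⟩
  · refine Set.eq_univ_of_forall fun cc => ?_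
    exact ⟨a cc, Or.inl (haX cc), b cc, Or.inl (hbX cc), hab cc, hΔab cc⟩
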